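/- Let m be a positive integer, n = 2^m - 1, and k an integer with k ≥ n. For any two vertices x and y of the path graph P_n, the number of walks of length k from x to y in P_n is even. -/

import Mathlib

/-- The path graph on `n` vertices. -/
def pathGraph (n : ℕ) : SimpleGraph (Fin n) where
  Adj i j := (i : ℕ) + 1 = j ∨ (j : ℕ) + 1 = i
  symm := ⟨fun i j h => h.symm⟩
  loopless := ⟨by intro i h; rcases h with h | h <;> omega⟩

instance (n : ℕ) : DecidableRel (pathGraph n).Adj :=
  fun i j => inferInstanceAs (Decidable (((i : ℕ) + 1 = j) ∨ ((j : ℕ) + 1 = i)))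

namespace EW

instance instN (m : ℕ) : NeZero (2 ^ (m + 1) : ℕ) := ⟨by positivity⟩

lemma add_self_zmod2 (a : ZMod 2) : a + a = 0 := by revert a; decide

lemma mod_helper (g s i : ℕ) (hs : s ≤ g) (hi : i < g) :
    ((i + (g - s)) % g + s) % g = i := by
  rcases lt_or_ge (i + (g - s)) g with h | h
  · rw [Nat.mod_eq_of_lt h]
    have he : i + (g - s) + s = i + g := by omega
    rw [he, Nat.add_mod_right, Nat.mod_eq_of_lt hi]
  · have h2 : (i + (g - s)) % g = i + (g - s) - g := by
      rw [Nat.mod_eq_sub_mod h, Nat.mod_eq_of_lt (by omega)]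
    rw [h2]
    have he : i + (g - s) - g + s = i := by omega
    rw [he, Nat.mod_eq_of_lt hi]

lemma choose_two_pow_sub_one_mod_two (m : ℕ) :
    ∀ i ≤ 2 ^ m - 1, Nat.choose (2 ^ m - 1) i % 2 = 1 := by
  haveI : Fact (Nat.Prime 2) := ⟨Nat.prime_two⟩
  induction m with
  | zero => intro i hi; interval_cases i <;> rfl
  | succ m ih =>
    intro i hi
    have h2m : 0 < 2 ^ m := by positivity
    have hpow : 2 ^ (m + 1) = 2 * 2 ^ m := by ring
    have lucas := Choose.choose_modEq_choose_mod_mul_choose_div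
      (p := 2) (n := 2 ^ (m + 1) - 1) (k := i)
    have hcast : ((Nat.choose (2 ^ (m + 1) - 1) i : ℤ) : ZMod 2)
        = ((Nat.choose ((2 ^ (m + 1) - 1) % 2) (i % 2) *
            Nat.choose ((2 ^ (m + 1) - 1) / 2) (i / 2) : ℤ) : ZMod 2) := by
      rw [ZMod.intCast_eq_intCast_iff]
      exact_mod_cast lucas
    have hmod : (2 ^ (m + 1) - 1) % 2 = 1 := by omega
    have hdiv : (2 ^ (m + 1) - 1) / 2 = 2 ^ m - 1 := by omega
    rw [hmod, hdiv] at hcast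
    have h1 : Nat.choose 1 (i % 2) = 1 := by
      rcases Nat.mod_two_eq_zero_or_one i with h | h <;> simp [h]
    rw [h1] at hcast
    push_cast at hcast
    simp only [one_mul] at hcast
    have hih := ih (i / 2) (by omega)
    have hfin : ((Nat.choose (2 ^ (m + 1) - 1) i : ℕ) : ZMod 2)
        = ((Nat.choose (2 ^ m - 1) (i / 2) : ℕ) : ZMod 2) := by exact_mod_cast hcast
    rw [ZMod.natCast_eq_natCast_iff'] at hfin
    omega

def Sh (m : ℕ) (a : ZMod (2 ^ (m + 1))) :
    Matrix (ZMod (2 ^ (m + 1))) (ZMod (2 ^ (m + 1))) (ZMod 2) :=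
  Matrix.of fun u v => if v = u + a then 1 else 0

lemma Sh_mul_apply (m : ℕ) (a : ZMod (2 ^ (m + 1))) {ι : Type} [Fintype ι]
    (M : Matrix (ZMod (2 ^ (m + 1))) ι (ZMod 2)) (u : ZMod (2 ^ (m + 1))) (x : ι) :
    (Sh m a * M) u x = M (u + a) x := by
  rw [Matrix.mul_apply, Finset.sum_eq_single (u + a)]
  · simp [Sh]
  · intro b _ hb; simp [Sh, hb]
  · simp

lemma Sh_zero (m : ℕ) : Sh m 0 = 1 := by
  ext u v
  simp [Sh, Matrix.one_apply, eq_comm]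

lemma Sh_mul (m : ℕ) (a b : ZMod (2 ^ (m + 1))) : Sh m a * Sh m b = Sh m (a + b) := by
  ext u v
  rw [Sh_mul_apply]
  simp [Sh, add_assoc]

lemma Sh_pow (m : ℕ) (a : ZMod (2 ^ (m + 1))) (i : ℕ) : Sh m a ^ i = Sh m (i * a) := by
  induction i with
  | zero => simp [Sh_zero]
  | succ i ih =>
    rw [pow_succ (Sh m a) i, ih, Sh_mul]
    congr 1
    push_cast
    ring

lemma two_eq_zero_matrix {ι : Type} [Fintype ι] [DecidableEq ι] :
    (2 : Matrix ι ι (ZMod 2)) = 0 := by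
  have h : (2 : Matrix ι ι (ZMod 2)) = 1 + 1 := by norm_num
  rw [h]
  ext u v
  by_cases h2 : u = v <;> simp [Matrix.add_apply, Matrix.one_apply, h2] <;> decide

lemma natCast_matrix_odd {ι : Type} [Fintype ι] [DecidableEq ι] {c : ℕ} (hc : c % 2 = 1) :
    ((c : ℕ) : Matrix ι ι (ZMod 2)) = 1 := by
  have h : c = 2 * (c / 2) + 1 := by omega
  rw [h, Nat.cast_add, Nat.cast_mul, Nat.cast_one, Nat.cast_ofNat, two_eq_zero_matrix,
    zero_mul, zero_add]

def Pm (m n : ℕ) : Matrix (ZMod (2 ^ (m + 1))) (Fin n) (ZMod 2) :=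
  Matrix.of fun u x =>
    (if u = (((x : ℕ) + 1 : ℕ) : ZMod (2 ^ (m + 1))) then 1 else 0) +
    (if u = -(((x : ℕ) + 1 : ℕ) : ZMod (2 ^ (m + 1))) then 1 else 0)

lemma intertwine (m n : ℕ) (hn : n = 2 ^ m - 1) :
    Pm m n * (pathGraph n).adjMatrix (ZMod 2) = (Sh m 1 + Sh m (-1)) * Pm m n := by
  ext u x
  rw [Matrix.add_mul, Matrix.add_apply, Sh_mul_apply, Sh_mul_apply]
  set s := (x : ℕ) with hsdef
  have hsn : s < n := x.isLt
  have hm2 : 0 < 2 ^ m := by positivity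
  set Q : ℕ → ZMod 2 := fun t =>
    (if u = (t : ZMod (2 ^ (m + 1))) then 1 else 0) +
    (if u = -(t : ZMod (2 ^ (m + 1))) then 1 else 0) with hQ
  have hRHS : Pm m n (u + 1) x + Pm m n (u + -1) x = Q s + Q (s + 2) := by
    have c1 : (u + 1 = ((s + 1 : ℕ) : ZMod (2 ^ (m + 1))))
        ↔ (u = ((s : ℕ) : ZMod (2 ^ (m + 1)))) := by
      push_cast; constructor <;> intro h <;> linear_combination h
    have c2 : (u + 1 = -((s + 1 : ℕ) : ZMod (2 ^ (m + 1))))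
        ↔ (u = -((s + 2 : ℕ) : ZMod (2 ^ (m + 1)))) := by
      push_cast; constructor <;> intro h <;> linear_combination h
    have c3 : (u + -1 = ((s + 1 : ℕ) : ZMod (2 ^ (m + 1))))
        ↔ (u = ((s + 2 : ℕ) : ZMod (2 ^ (m + 1)))) := by
      push_cast; constructor <;> intro h <;> linear_combination h
    have c4 : (u + -1 = -((s + 1 : ℕ) : ZMod (2 ^ (m + 1))))
        ↔ (u = -((s : ℕ) : ZMod (2 ^ (m + 1)))) := by
      push_cast; constructor <;> intro h <;> linear_combination h
    simp only [Pm, Matrix.of_apply, hQ]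
    rw [if_congr c1 rfl rfl, if_congr c2 rfl rfl, if_congr c3 rfl rfl, if_congr c4 rfl rfl]
    ring
  have hsplit : ∀ y : Fin n, Pm m n u y * (pathGraph n).adjMatrix (ZMod 2) y x
      = Pm m n u y * (if (y : ℕ) + 1 = s then 1 else 0)
        + Pm m n u y * (if s + 1 = (y : ℕ) then 1 else 0) := by
    intro y
    rw [SimpleGraph.adjMatrix_apply]
    by_cases h1 : (y : ℕ) + 1 = s <;> by_cases h2 : s + 1 = (y : ℕ)
    · omega
    · rw [if_pos (show (pathGraph n).Adj y x from Or.inl h1), if_pos h1, if_neg h2]; ring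
    · rw [if_pos (show (pathGraph n).Adj y x from Or.inr h2), if_neg h1, if_pos h2]; ring
    · rw [if_neg (show ¬ (pathGraph n).Adj y x from by rintro (h | h) <;> omega),
        if_neg h1, if_neg h2]; ring
  rw [Matrix.mul_apply, Finset.sum_congr rfl (fun y _ => hsplit y), Finset.sum_add_distrib]
  have hS1 : (∑ y : Fin n, Pm m n u y * (if (y : ℕ) + 1 = s then 1 else 0))
      = if s = 0 then 0 else Q s := by
    rcases Nat.eq_zero_or_pos s with h0 | hpos
    · rw [if_pos h0]
      apply Finset.sum_eq_zero
      intro y _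
      rw [if_neg (by omega), mul_zero]
    · rw [if_neg (by omega), Finset.sum_eq_single (⟨s - 1, by omega⟩ : Fin n)]
      · rw [if_pos (by simp; omega), mul_one]
        simp only [Pm, Matrix.of_apply, hQ]
        have hv : ((⟨s - 1, by omega⟩ : Fin n) : ℕ) + 1 = s := by simp; omega
        rw [hv]
      · intro y _ hy
        rw [if_neg (fun hc => hy (Fin.ext (by simp; omega))), mul_zero]
      · intro habs; exact absurd (Finset.mem_univ _) habs
  have hS2 : (∑ y : Fin n, Pm m n u y * (if s + 1 = (y : ℕ) then 1 else 0))
      = if s + 1 < n then Q (s + 2) else 0 := by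
    rcases lt_or_ge (s + 1) n with hlt | hge
    · rw [if_pos hlt, Finset.sum_eq_single (⟨s + 1, hlt⟩ : Fin n)]
      · rw [if_pos (by simp), mul_one]
        simp only [Pm, Matrix.of_apply, hQ]
      · intro y _ hy
        rw [if_neg (fun hc => hy (Fin.ext (by simp; omega))), mul_zero]
      · intro habs; exact absurd (Finset.mem_univ _) habs
    · rw [if_neg (by omega)]
      apply Finset.sum_eq_zero
      intro y _
      have := y.isLt
      rw [if_neg (by omega), mul_zero]
  rw [hS1, hS2, hRHS]
  have hQ0 : Q 0 = 0 := by
    rw [hQ]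
    simp only [Nat.cast_zero, neg_zero]
    exact add_self_zmod2 _
  have hQn : Q (n + 1) = 0 := by
    have hneg : -((n + 1 : ℕ) : ZMod (2 ^ (m + 1))) = ((n + 1 : ℕ) : ZMod (2 ^ (m + 1))) := by
      have h2 : ((n + 1 : ℕ) : ZMod (2 ^ (m + 1))) + ((n + 1 : ℕ) : ZMod (2 ^ (m + 1))) = 0 := by
        rw [← Nat.cast_add,
          show (n + 1) + (n + 1) = 2 ^ (m + 1) from by
            have : 2 ^ (m + 1) = 2 * 2 ^ m := by ring
            omega,
          ZMod.natCast_self]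
      linear_combination -h2
    rw [hQ]
    simp only
    rw [hneg]
    exact add_self_zmod2 _
  by_cases h0 : s = 0 <;> by_cases hlt : s + 1 < n
  · rw [if_pos h0, if_pos hlt, h0, hQ0] <;> try ring
  · have hs1 : s + 2 = n + 1 := by omega
    rw [if_pos h0, if_neg hlt, hs1, hQn, h0, hQ0] <;> try ring
  · rw [if_neg h0, if_pos hlt] <;> try ring
  · have hs1 : s + 2 = n + 1 := by omega
    rw [if_neg h0, if_neg hlt, hs1, hQn] <;> try ring


lemma Bn_P (m n : ℕ) (hn : n = 2 ^ m - 1) :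
    (Sh m 1 + Sh m (-1)) ^ n * Pm m n = 0 := by
  subst hn
  set n := 2 ^ m - 1 with hn
  have hm2 : 0 < 2 ^ m := by positivity
  have hpow : 2 ^ (m + 1) = 2 * 2 ^ m := by ring
  have hcomm : Commute (Sh m 1) (Sh m (-1)) := by
    unfold Commute SemiconjBy
    rw [Sh_mul, Sh_mul]
    norm_num
  rw [hcomm.add_pow, Matrix.sum_mul]
  ext u x
  rw [Matrix.sum_apply, Matrix.zero_apply]
  set s := (x : ℕ) with hsdef
  have hsn : s < n := x.isLt
  have hterm : ∀ i ∈ Finset.range (n + 1),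
      (Sh m 1 ^ i * Sh m (-1) ^ (n - i) * (Nat.choose n i : Matrix (ZMod (2 ^ (m + 1)))
          (ZMod (2 ^ (m + 1))) (ZMod 2)) * Pm m n) u x
      = (if u + (((2 * i : ℕ) : ZMod (2 ^ (m + 1))) - ((n : ℕ) : ZMod (2 ^ (m + 1))))
            = (((s + 1 : ℕ)) : ZMod (2 ^ (m + 1))) then 1 else 0)
      + (if u + (((2 * i : ℕ) : ZMod (2 ^ (m + 1))) - ((n : ℕ) : ZMod (2 ^ (m + 1))))
            = -(((s + 1 : ℕ)) : ZMod (2 ^ (m + 1))) then 1 else 0) := by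
    intro i hi
    rw [Finset.mem_range] at hi
    rw [Sh_pow, Sh_pow, Sh_mul,
      natCast_matrix_odd (choose_two_pow_sub_one_mod_two m i (by omega)), mul_one,
      Sh_mul_apply]
    have harg : ((i : ZMod (2 ^ (m + 1))) * 1 + ((n - i : ℕ) : ZMod (2 ^ (m + 1))) * (-1))
        = (((2 * i : ℕ) : ZMod (2 ^ (m + 1))) - ((n : ℕ) : ZMod (2 ^ (m + 1)))) := by
      rw [Nat.cast_sub (by omega)]
      push_cast
      ring
    rw [harg]
    simp only [Pm, Matrix.of_apply]
    rfl
  rw [Finset.sum_congr rfl hterm, Finset.sum_add_distrib]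
  have hswap : (∑ i ∈ Finset.range (n + 1),
        (if u + (((2 * i : ℕ) : ZMod (2 ^ (m + 1))) - ((n : ℕ) : ZMod (2 ^ (m + 1))))
            = (((s + 1 : ℕ)) : ZMod (2 ^ (m + 1))) then (1 : ZMod 2) else 0))
      = ∑ i ∈ Finset.range (n + 1),
        (if u + (((2 * i : ℕ) : ZMod (2 ^ (m + 1))) - ((n : ℕ) : ZMod (2 ^ (m + 1))))
            = -(((s + 1 : ℕ)) : ZMod (2 ^ (m + 1))) then (1 : ZMod 2) else 0) := by
    apply Finset.sum_nbij' (i := fun a => (a + (2 ^ m - (s + 1))) % 2 ^ m)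
      (j := fun b => (b + (s + 1)) % 2 ^ m)
    · intro a ha
      rw [Finset.mem_range]
      have := Nat.mod_lt (a + (2 ^ m - (s + 1))) hm2
      omega
    · intro b hb
      rw [Finset.mem_range]
      have := Nat.mod_lt (b + (s + 1)) hm2
      omega
    · intro a ha
      rw [Finset.mem_range] at ha
      exact mod_helper (2 ^ m) (s + 1) a (by omega) (by omega)
    · intro b hb
      rw [Finset.mem_range] at hb
      have h := mod_helper (2 ^ m) (2 ^ m - (s + 1)) b (by omega) (by omega)
      rwa [show 2 ^ m - (2 ^ m - (s + 1)) = s + 1 from by omega] at h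
    · intro a ha
      rw [Finset.mem_range] at ha
      set t := (a + (2 ^ m - (s + 1))) % 2 ^ m with ht
      have hcast : ((2 * t : ℕ) : ZMod (2 ^ (m + 1)))
          = ((2 * a : ℕ) : ZMod (2 ^ (m + 1))) - ((2 * (s + 1) : ℕ) : ZMod (2 ^ (m + 1))) := by
        have h1 : ((2 * t : ℕ) : ZMod (2 ^ (m + 1)))
            = ((2 * (a + (2 ^ m - (s + 1))) : ℕ) : ZMod (2 ^ (m + 1))) := by
          rw [ZMod.natCast_eq_natCast_iff]
          have h2 := Nat.ModEq.mul_left' (c := 2)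
            (Nat.mod_modEq (a + (2 ^ m - (s + 1))) (2 ^ m))
          rw [ht]
          rw [hpow]
          exact h2
        rw [h1, show 2 * (a + (2 ^ m - (s + 1))) = 2 * a + (2 ^ (m + 1) - 2 * (s + 1)) from by
            omega,
          Nat.cast_add, Nat.cast_sub (by omega), ZMod.natCast_self]
        ring
      apply if_congr _ rfl rfl
      constructor
      · intro h
        rw [hcast]
        push_cast
        push_cast at h
        linear_combination h
      · intro h
        rw [hcast] at h
        push_cast at h
        push_cast
        linear_combination h
  rw [hswap]
  exact add_self_zmod2 _

end EW

namespace EW2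
open EW

lemma extract (m n : ℕ) (hn : n = 2 ^ m - 1)
    (M : Matrix (Fin n) (Fin n) (ZMod 2)) (x' y : Fin n) :
    (Pm m n * M) ((((x' : ℕ) + 1 : ℕ)) : ZMod (2 ^ (m + 1))) y = M x' y := by
  have hm2 : 0 < 2 ^ m := by positivity
  have hpow : 2 ^ (m + 1) = 2 * 2 ^ m := by ring
  have hx := x'.isLt
  rw [Matrix.mul_apply, Finset.sum_eq_single x']
  · simp only [Pm, Matrix.of_apply]
    rw [if_pos trivial, if_neg (fun h => by
      have h2 : (((((x' : ℕ) + 1) + ((x' : ℕ) + 1)) : ℕ) : ZMod (2 ^ (m + 1))) = 0 := by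
        push_cast
        push_cast at h
        linear_combination h
      rw [ZMod.natCast_eq_zero_iff] at h2
      have := Nat.le_of_dvd (by omega) h2
      omega)]
    ring
  · intro y' _ hy'
    have hy := y'.isLt
    simp only [Pm, Matrix.of_apply]
    rw [if_neg (fun h => by
      have h2 := congrArg ZMod.val h
      rw [ZMod.val_cast_of_lt (by omega), ZMod.val_cast_of_lt (by omega)] at h2
      exact hy' (Fin.ext (by omega))), if_neg (fun h => by
      have h2 : (((((x' : ℕ) + 1) + ((y' : ℕ) + 1)) : ℕ) : ZMod (2 ^ (m + 1))) = 0 := by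
        push_cast
        push_cast at h
        linear_combination h
      rw [ZMod.natCast_eq_zero_iff] at h2
      have := Nat.le_of_dvd (by omega) h2
      omega)]
    ring
  · intro habs; exact absurd (Finset.mem_univ _) habs

lemma inter_pow (m n : ℕ) (hn : n = 2 ^ m - 1) (k : ℕ) :
    Pm m n * (pathGraph n).adjMatrix (ZMod 2) ^ k = (Sh m 1 + Sh m (-1)) ^ k * Pm m n := by
  induction k with
  | zero => simp
  | succ k ih =>
    rw [pow_succ ((pathGraph n).adjMatrix (ZMod 2)) k, pow_succ (Sh m 1 + Sh m (-1)) k,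
      ← Matrix.mul_assoc, ih, Matrix.mul_assoc, intertwine m n hn, ← Matrix.mul_assoc]

end EW2


/-- For `n = 2^m - 1` and `k ≥ n`, the number of walks of length `k` between any two
vertices of the path graph `P_n` is even. -/
theorem even_card_walks_pathGraph (m : ℕ) (hm : 0 < m) (n : ℕ) (hn : n = 2 ^ m - 1)
    (k : ℕ) (hk : n ≤ k) (x y : Fin n) :
    Even ((pathGraph n).finsetWalkLength k x y).card := by
  classical
  have h1 : ((pathGraph n).finsetWalkLength k x y).card
      = ((pathGraph n).adjMatrix ℕ ^ k) x y := by
    rw [SimpleGraph.adjMatrix_pow_apply_eq_card_walk, SimpleGraph.card_set_walk_length_eq,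
      Nat.cast_id]
  have hmap : ((Nat.castRingHom (ZMod 2)).mapMatrix ((pathGraph n).adjMatrix ℕ))
      = (pathGraph n).adjMatrix (ZMod 2) := by
    ext i j
    simp [RingHom.mapMatrix_apply, Matrix.map_apply, SimpleGraph.adjMatrix_apply, apply_ite]
  have h2 : ((((pathGraph n).adjMatrix ℕ ^ k) x y : ℕ) : ZMod 2)
      = (((pathGraph n).adjMatrix (ZMod 2)) ^ k) x y := by
    calc ((((pathGraph n).adjMatrix ℕ ^ k) x y : ℕ) : ZMod 2)
        = ((Nat.castRingHom (ZMod 2)).mapMatrix (((pathGraph n).adjMatrix ℕ) ^ k)) x y := rfl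
      _ = (((Nat.castRingHom (ZMod 2)).mapMatrix ((pathGraph n).adjMatrix ℕ)) ^ k) x y := by
          rw [map_pow]
      _ = _ := by rw [hmap]
  have hzero : (((pathGraph n).adjMatrix (ZMod 2)) ^ k) x y = 0 := by
    have hk2 : EW.Pm m n * ((pathGraph n).adjMatrix (ZMod 2) ^ k) = 0 := by
      rw [EW2.inter_pow m n hn k, show k = (k - n) + n from (Nat.sub_add_cancel hk).symm,
        pow_add (EW.Sh m 1 + EW.Sh m (-1)) (k - n) n, Matrix.mul_assoc, EW.Bn_P m n hn,
        Matrix.mul_zero]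
    have hext := EW2.extract m n hn ((pathGraph n).adjMatrix (ZMod 2) ^ k) x y
    rw [hk2, Matrix.zero_apply] at hext
    exact hext.symm
  rw [h1, Nat.even_iff]
  have h3 : ((((pathGraph n).adjMatrix ℕ ^ k) x y : ℕ) : ZMod 2) = 0 := by rw [h2, hzero]
  rw [ZMod.natCast_eq_zero_iff] at h3
  omega
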